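/- Let γ ∈ (0,1] and define θ_j = γ/(1+j)^{1+γ} for j ≥ 1, and Θ_k = ∏_{j=1}^k (1 - θ_j). Then for all k ≥ 1, e^{-(1+γ)} ≤ Θ_k ≤ 1. -/

import Mathlib

open Real Finset

lemma aux_key (γ : ℝ) (hγ0 : 0 < γ) (hγ1 : γ ≤ 1) (x : ℝ) (hx : 1 ≤ x) :
    γ / (1 + x) ^ (1 + γ) ≤ x ^ (-γ) - (1 + x) ^ (-γ) := by
  have hx0 : (0:ℝ) < x := lt_of_lt_of_le one_pos hx
  have h1x : (0:ℝ) < 1 + x := by linarith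
  set t : ℝ := x / (1 + x) with ht
  have ht0 : 0 < t := div_pos hx0 h1x
  have ht1 : t < 1 := (div_lt_one h1x).2 (by linarith)
  have h1t : 1 - t = 1 / (1 + x) := by
    field_simp [ht]
    rw [ht, sub_mul, div_mul_cancel₀ _ h1x.ne']; ring
  -- Bernoulli
  have hb : t ^ γ ≤ 1 - γ * (1 - t) := by
    have := rpow_one_add_le_one_add_mul_self (s := t - 1) (by linarith) hγ0.le hγ1
    have h : (1 + (t - 1)) = t := by ring
    rw [h] at this
    linarith [this]
  set u : ℝ := γ / (1 + x) with hu
  have hu0 : 0 < u := div_pos hγ0 h1x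
  have hu2 : u ≤ 1/2 := by
    rw [hu, div_le_iff₀ h1x]; linarith
  have hbu : t ^ γ ≤ (1 - u) := by
    have : γ * (1 - t) = u := by rw [h1t, hu]; ring
    linarith [hb, this.symm.le]
  set P : ℝ := (1 + x) ^ γ with hP
  have hP0 : 0 < P := rpow_pos_of_pos h1x γ
  set c : ℝ := x ^ γ with hc
  have hc0 : 0 < c := rpow_pos_of_pos hx0 γ
  have hcP : c ≤ (1 - u) * P := by
    have htP : t ^ γ * P = c := by
      rw [hP, hc, ht, ← Real.mul_rpow (by positivity) (by positivity)]
      field_simp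
    calc c = t ^ γ * P := htP.symm
    _ ≤ (1 - u) * P := by
      apply mul_le_mul_of_nonneg_right hbu hP0.le
  have hxneg : x ^ (-γ) = c⁻¹ := by rw [hc, Real.rpow_neg hx0.le]
  have h1xneg : (1 + x) ^ (-γ) = P⁻¹ := by rw [hP, Real.rpow_neg h1x.le]
  have hsplit : (1 + x) ^ (1 + γ) = (1 + x) * P := by
    rw [hP, Real.rpow_add h1x 1 γ, Real.rpow_one]
  rw [hxneg, h1xneg, hsplit]
  have hinv : ((1 - u) * P)⁻¹ ≤ c⁻¹ := by
    apply inv_anti₀ hc0 hcP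
  have hcalc : γ / ((1 + x) * P) ≤ ((1 - u) * P)⁻¹ - P⁻¹ := by
    have h1u : (0:ℝ) < 1 - u := by linarith
    have e0 : γ / ((1 + x) * P) = u / P := by
      rw [hu]; field_simp
    have e1 : ((1 - u) * P)⁻¹ - P⁻¹ = u / ((1 - u) * P) := by
      field_simp; ring
    rw [e0, e1]
    apply div_le_div_of_nonneg_left hu0.le (by positivity)
    nlinarith
  linarith [hinv, hcalc]

lemma aux_sum (γ : ℝ) (hγ0 : 0 < γ) (hγ1 : γ ≤ 1) (k : ℕ) :
    (∑ j ∈ Finset.Icc 1 k, γ / ((1 : ℝ) + (j : ℝ)) ^ (1 + γ)) ≤ 1 - ((k : ℝ) + 1) ^ (-γ) := by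
  induction k with
  | zero => simp [Real.rpow_neg]
  | succ n ih =>
    rw [Finset.sum_Icc_succ_top (by omega)]
    have hkey := aux_key γ hγ0 hγ1 ((n : ℝ) + 1) (by have := Nat.cast_nonneg (α := ℝ) n; linarith)
    push_cast
    have e : (1 : ℝ) + ((n : ℝ) + 1) = (n : ℝ) + 1 + 1 := by ring
    rw [e] at hkey ⊢
    linarith [ih, hkey]

theorem stmt_3 (γ : ℝ) (hγ0 : 0 < γ) (hγ1 : γ ≤ 1) :
    ∀ k : ℕ, 1 ≤ k →
      Real.exp (-(1 + γ)) ≤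
        (∏ j ∈ Finset.Icc 1 k, (1 - γ / ((1 : ℝ) + (j : ℝ)) ^ (1 + γ))) ∧
      (∏ j ∈ Finset.Icc 1 k, (1 - γ / ((1 : ℝ) + (j : ℝ)) ^ (1 + γ))) ≤ 1 := by
  intro k hk
  -- bounds on each term
  have hterm : ∀ j ∈ Finset.Icc 1 k, 0 < γ / ((1 : ℝ) + (j : ℝ)) ^ (1 + γ) ∧
      (1 + γ) * (γ / ((1 : ℝ) + (j : ℝ)) ^ (1 + γ)) ≤ γ := by
    intro j hj
    have hj1 : 1 ≤ j := (Finset.mem_Icc.1 hj).1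
    have hjr : (1:ℝ) ≤ (j:ℝ) := by exact_mod_cast hj1
    have hb : (1:ℝ) < 1 + (j:ℝ) := by linarith
    have hpos : (0:ℝ) < ((1 : ℝ) + (j : ℝ)) ^ (1 + γ) := rpow_pos_of_pos (by linarith) _
    have hge : (1 + γ) ≤ ((1 : ℝ) + (j : ℝ)) ^ (1 + γ) := by
      calc (1 + γ) ≤ 1 + (j:ℝ) := by linarith
      _ = (1 + (j:ℝ)) ^ (1:ℝ) := (Real.rpow_one _).symm
      _ ≤ ((1 : ℝ) + (j : ℝ)) ^ (1 + γ) :=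
        Real.rpow_le_rpow_of_exponent_le hb.le (by linarith)
    constructor
    · positivity
    · have hd : γ / ((1 : ℝ) + (j : ℝ)) ^ (1 + γ) ≤ γ / (1 + γ) :=
        div_le_div_of_nonneg_left hγ0.le (by linarith) hge
      calc (1 + γ) * (γ / ((1 : ℝ) + (j : ℝ)) ^ (1 + γ)) ≤ (1 + γ) * (γ / (1 + γ)) :=
            mul_le_mul_of_nonneg_left hd (by linarith)
      _ = γ := by field_simp
  have hfac : ∀ j ∈ Finset.Icc 1 k,
      Real.exp (-((1 + γ) * (γ / ((1 : ℝ) + (j : ℝ)) ^ (1 + γ)))) ≤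
        1 - γ / ((1 : ℝ) + (j : ℝ)) ^ (1 + γ) := by
    intro j hj
    obtain ⟨h1, h2⟩ := hterm j hj
    set θ := γ / ((1 : ℝ) + (j : ℝ)) ^ (1 + γ)
    have hθ1 : θ < 1 := by nlinarith
    have hy : 1 + (1 + γ) * θ ≤ Real.exp ((1 + γ) * θ) := by
      linarith [Real.add_one_le_exp ((1 + γ) * θ)]
    rw [Real.exp_neg]
    rw [inv_le_comm₀ (Real.exp_pos _) (by nlinarith)]
    calc (1 - θ)⁻¹ ≤ 1 + (1 + γ) * θ := by
          rw [inv_eq_one_div, div_le_iff₀ (by linarith)]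
          nlinarith
    _ ≤ Real.exp ((1 + γ) * θ) := hy
  constructor
  · calc Real.exp (-(1 + γ))
        ≤ Real.exp (∑ j ∈ Finset.Icc 1 k, -((1 + γ) * (γ / ((1 : ℝ) + (j : ℝ)) ^ (1 + γ)))) := by
          apply Real.exp_le_exp.2
          have hs := aux_sum γ hγ0 hγ1 k
          have hsum : ∑ j ∈ Finset.Icc 1 k, -((1 + γ) * (γ / ((1 : ℝ) + (j : ℝ)) ^ (1 + γ)))
              = -((1 + γ) * ∑ j ∈ Finset.Icc 1 k, γ / ((1 : ℝ) + (j : ℝ)) ^ (1 + γ)) := by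
            rw [Finset.mul_sum, ← Finset.sum_neg_distrib]
          rw [hsum]
          have hkpow : (0:ℝ) ≤ ((k : ℝ) + 1) ^ (-γ) := (rpow_pos_of_pos (by positivity) _).le
          have hS1 : ∑ j ∈ Finset.Icc 1 k, γ / ((1 : ℝ) + (j : ℝ)) ^ (1 + γ) ≤ 1 := by linarith
          nlinarith [hS1]
    _ = ∏ j ∈ Finset.Icc 1 k, Real.exp (-((1 + γ) * (γ / ((1 : ℝ) + (j : ℝ)) ^ (1 + γ)))) :=
          Real.exp_sum _ _
    _ ≤ ∏ j ∈ Finset.Icc 1 k, (1 - γ / ((1 : ℝ) + (j : ℝ)) ^ (1 + γ)) := by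
          apply Finset.prod_le_prod (fun j _ => (Real.exp_pos _).le) hfac
  · apply Finset.prod_le_one
    · intro j hj
      obtain ⟨h1, h2⟩ := hterm j hj
      nlinarith
    · intro j hj
      obtain ⟨h1, _⟩ := hterm j hj
      linarith
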